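/- Let 𝒜 be a unital locally C*-algebra, {ℋ; ℰ = {ℋ_n}_n; 𝒟_ℰ} a quantized Fréchet domain in a Hilbert space ℋ, and Φ : M₂(𝒜) → C*(𝒟_{ℰ⊕ℰ}) a unital local completely positive map satisfying Φ([[1_𝒜, 0],[0, 0]]) = [[1_{C*(𝒟_ℰ)}, 0],[0, 0]]. Then there exist unital local completely positive maps φ₁, φ₂ : 𝒜 → C*(𝒟_ℰ) such that Φ([[a, 0],[0, 0]]) = [[φ₁(a), 0],[0, 0]] and Φ([[0, 0],[0, d]]) = [[0, 0],[0, φ₂(d)]] for all a, d ∈ 𝒜. -/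

import Mathlib

open scoped ComplexOrder

noncomputable section

/-! ### Locally C*-algebras -/

/-- A C*-seminorm on a complex *-algebra: a submultiplicative *-invariant seminorm `p`
with `p (a* a) = (p a)²`. -/
structure IsCStarSeminorm {A : Type*} [Ring A] [StarRing A] [Algebra ℂ A] (p : A → ℝ) :
    Prop where
  nonneg : ∀ a, 0 ≤ p a
  map_smul : ∀ (c : ℂ) (a : A), p (c • a) = ‖c‖ * p a
  add_le : ∀ a b, p (a + b) ≤ p a + p b
  mul_le : ∀ a b, p (a * b) ≤ p a * p b
  map_star : ∀ a, p (star a) = p a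
  cstar : ∀ a, p (star a * a) = p a ^ 2

/-- The `Seminorm` associated with a C*-seminorm. -/
def IsCStarSeminorm.toSeminorm {A : Type*} [Ring A] [StarRing A] [Algebra ℂ A] {p : A → ℝ}
    (h : IsCStarSeminorm p) : Seminorm ℂ A where
  toFun := p
  map_zero' := by simpa using h.map_smul 0 0
  add_le' := h.add_le
  neg' := fun a => by simpa using h.map_smul (-1) a
  smul' := h.map_smul

/-- `A` (a complete Hausdorff topological complex `*`-algebra) is a locally C*-algebra whose
topology is determined by the upward filtered family `p = {p_λ}_{λ ∈ Λ}` of C*-seminorms. -/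
structure IsLocallyCStarAlgebra {A : Type*} {Λ : Type*} [Ring A] [StarRing A] [Algebra ℂ A]
    [StarModule ℂ A] [Nonempty Λ] [UniformSpace A] [IsUniformAddGroup A] (p : Λ → A → ℝ) :
    Prop where
  cstarSeminorm : ∀ l, IsCStarSeminorm (p l)
  directed : ∀ l₁ l₂ : Λ, ∃ l₃, (∀ a, p l₁ a ≤ p l₃ a) ∧ (∀ a, p l₂ a ≤ p l₃ a)
  separating : ∀ a : A, (∀ l, p l a = 0) → a = 0
  withSeminorms : WithSeminorms (fun l => (cstarSeminorm l).toSeminorm)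
  complete : CompleteSpace A

/-- The data of the induced C*-seminorms `p_λ^k` on the matrix algebras `M_k(A)`:
`pk k l` is a C*-seminorm on `M_k(A)` restricting to `p l` for `k = 1` and whose kernel is
`M_k(ker p_λ)` (these properties determine `p_λ^k` uniquely, `M_k(A_λ)` being a C*-algebra). -/
structure IsMatrixCStarSeminormFamily {A : Type*} {Λ : Type*} [Ring A] [StarRing A]
    [Algebra ℂ A] (p : Λ → A → ℝ) (pk : ∀ k : ℕ, Λ → Matrix (Fin k) (Fin k) A → ℝ) :
    Prop where
  cstarSeminorm : ∀ k l, IsCStarSeminorm (pk k l)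
  compat : ∀ l (M : Matrix (Fin 1) (Fin 1) A), pk 1 l M = p l (M 0 0)
  ker : ∀ k l (M : Matrix (Fin k) (Fin k) A), pk k l M = 0 ↔ ∀ i j, p l (M i j) = 0

/-- `a` is `λ`-positive (`a ≥_λ 0`) w.r.t. the C*-seminorm `p = p_λ`:
`a = b* b + c` for some `b, c` with `p_λ c = 0`. -/
def LocalPositive {A : Type*} [Ring A] [StarRing A] (p : A → ℝ) (a : A) : Prop :=
  ∃ b c, p c = 0 ∧ a = star b * b + c

/-! ### Quantized domains and `C*(𝒟_ℰ)` -/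

section Hilbert

variable {H : Type*} [NormedAddCommGroup H] [InnerProductSpace ℂ H]

/-- A quantized domain in a Hilbert space `H`: an upward filtered family of closed subspaces
whose union `𝒟_ℰ` is dense in `H`. -/
structure IsQuantizedDomain {ι : Type*} (E : ι → Submodule ℂ H) : Prop where
  closed : ∀ i, IsClosed (E i : Set H)
  directed : Directed (· ≤ ·) E
  dense : Dense (⋃ i, (E i : Set H))

/-- A quantized Fréchet domain in a Hilbert space `H`: an increasing sequence of closed
subspaces whose union `𝒟_ℰ` is dense in `H`. -/
structure IsQuantizedFrechetDomain (E : ℕ → Submodule ℂ H) : Prop where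
  closed : ∀ n, IsClosed (E n : Set H)
  mono : Monotone E
  dense : Dense (⋃ n, (E n : Set H))

/-- The inclusion of `ℋ_i` into the union space `𝒟_ℰ = ⋃ i, ℋ_i` (realized as `⨆ i, E i`). -/
def inclE {ι : Type*} (E : ι → Submodule ℂ H) (i : ι) (x : H) (hx : x ∈ E i) :
    ↥(⨆ j, E j) := ⟨x, le_iSup E i hx⟩

/-- Membership in `C*(𝒟_ℰ)` for a linear operator `T` on the union space `𝒟_ℰ`, via the
characterization: every `ℋ_i` is `T`-invariant, every `ℋ_i^⊥ ∩ 𝒟_ℰ` is `T`-invariant, and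
the restriction of `T` to every `ℋ_i` is bounded. -/
def MemCStar {ι : Type*} (E : ι → Submodule ℂ H)
    (T : ↥(⨆ i, E i) →ₗ[ℂ] ↥(⨆ i, E i)) : Prop :=
  ∀ i, (∀ x : ↥(⨆ j, E j), (x : H) ∈ E i → ((T x : H) ∈ E i)) ∧
    (∀ x : ↥(⨆ j, E j), (x : H) ∈ (E i)ᗮ → ((T x : H) ∈ (E i)ᗮ)) ∧
    ∃ C : ℝ, ∀ x : ↥(⨆ j, E j), (x : H) ∈ E i → ‖(T x : H)‖ ≤ C * ‖x‖

/-- `S` is (the restriction to `𝒟_ℰ` of) the adjoint of `T`: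
`⟪T x, y⟫ = ⟪x, S y⟫` for all `x, y ∈ 𝒟_ℰ`. -/
def IsAdjointOn {ι : Type*} (E : ι → Submodule ℂ H)
    (T S : ↥(⨆ i, E i) →ₗ[ℂ] ↥(⨆ i, E i)) : Prop :=
  ∀ x y : ↥(⨆ i, E i), (inner ℂ ((T x : H)) ((y : H)) : ℂ) = inner ℂ ((x : H)) ((S y : H))

/-- The norm `‖T‖_i = ‖T|_{ℋ_i}‖ = sup {‖T x‖ : x ∈ ℋ_i, ‖x‖ ≤ 1}` of the restriction of
`T` to `ℋ_i`. -/
def restrictedNorm {ι : Type*} (E : ι → Submodule ℂ H) (i : ι)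
    (T : ↥(⨆ j, E j) →ₗ[ℂ] ↥(⨆ j, E j)) : ℝ :=
  sSup ((fun x : ↥(⨆ j, E j) => ‖(T x : H)‖) '' {x | (x : H) ∈ E i ∧ ‖(x : H)‖ ≤ 1})

section Complete

variable [CompleteSpace H]

/-- The orthogonal projection onto a closed subspace `K`, as an operator `H → H`. -/
def projCL (K : Submodule ℂ H) (hK : IsClosed (K : Set H)) : H →L[ℂ] H :=
  haveI : CompleteSpace K := hK.completeSpace_coe
  K.subtypeL.comp (K.orthogonalProjectionOnto)

theorem projCL_mem (K : Submodule ℂ H) (hK : IsClosed (K : Set H)) (x : H) :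
    projCL K hK x ∈ K := by
  haveI : CompleteSpace K := hK.completeSpace_coe
  exact (K.orthogonalProjectionOnto x).2

/-- The orthogonal projection `P_i` of `H` onto `ℋ_i`, viewed as a map into `𝒟_ℰ`. -/
def projD {ι : Type*} (E : ι → Submodule ℂ H) (hcl : ∀ i, IsClosed ((E i : Set H))) (i : ι)
    (x : H) : ↥(⨆ j, E j) :=
  inclE E i (projCL (E i) (hcl i) x) (projCL_mem _ _ _)

end Complete

/-! ### Local completely positive / completely contractive maps -/

variable {B : Type*} [Ring B] [StarRing B] [Algebra ℂ B] {Λ : Type*}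

/-- `φ`, defined on the subspace `S` of `B` and with values in `C*(𝒟_ℰ)`, is local completely
positive: for every `n` there is `λ` such that for every `k`, the `k`-amplification
`φ⁽ᵏ⁾([a_ij]) = [φ(a_ij)]` restricted to `ℋ_n^k` is a positive operator whenever
`[a_ij] ≥_λ 0`, and vanishes whenever `p_λ^k([a_ij]) = 0`. -/
def IsLocalCPOn {H : Type*} [NormedAddCommGroup H] [InnerProductSpace ℂ H] {ι : Type*}
    (pk : ∀ k : ℕ, Λ → Matrix (Fin k) (Fin k) B → ℝ)
    (E : ι → Submodule ℂ H) (S : Submodule ℂ B)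
    (φ : ↥S →ₗ[ℂ] (↥(⨆ n, E n) →ₗ[ℂ] ↥(⨆ n, E n))) : Prop :=
  ∀ n : ι, ∃ l : Λ, ∀ (k : ℕ) (M : Matrix (Fin k) (Fin k) B) (hM : ∀ i j, M i j ∈ S),
    (LocalPositive (pk k l) M →
      ∀ (ξ : Fin k → H) (hξ : ∀ i, ξ i ∈ E n),
        0 ≤ ∑ i, ∑ j, (inner ℂ (ξ i) ((φ ⟨M i j, hM i j⟩ (inclE E n (ξ j) (hξ j)) : H)) : ℂ)) ∧
    (pk k l M = 0 → ∀ (i j : Fin k) (x : H) (hx : x ∈ E n),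
      (φ ⟨M i j, hM i j⟩ (inclE E n x hx) : H) = 0)

/-- `φ : B → C*(𝒟_ℰ)` is local completely positive. -/
def IsLocalCP {H : Type*} [NormedAddCommGroup H] [InnerProductSpace ℂ H] {ι : Type*}
    (pk : ∀ k : ℕ, Λ → Matrix (Fin k) (Fin k) B → ℝ)
    (E : ι → Submodule ℂ H)
    (φ : B →ₗ[ℂ] (↥(⨆ n, E n) →ₗ[ℂ] ↥(⨆ n, E n))) : Prop :=
  ∀ n : ι, ∃ l : Λ, ∀ (k : ℕ) (M : Matrix (Fin k) (Fin k) B),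
    (LocalPositive (pk k l) M →
      ∀ (ξ : Fin k → H) (hξ : ∀ i, ξ i ∈ E n),
        0 ≤ ∑ i, ∑ j, (inner ℂ (ξ i) ((φ (M i j) (inclE E n (ξ j) (hξ j)) : H)) : ℂ)) ∧
    (pk k l M = 0 → ∀ (i j : Fin k) (x : H) (hx : x ∈ E n),
      (φ (M i j) (inclE E n x hx) : H) = 0)

/-- `φ`, defined on the subspace `S` of `B` and with values in `C*(𝒟_ℰ)`, is local completely
contractive: for every `n` there is `λ` such that
`‖φ⁽ᵏ⁾([a_ij])|_{ℋ_n^k}‖ ≤ p_λ^k([a_ij])` for every `k` and every `[a_ij] ∈ M_k` with entries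
in `S` (expressed via `‖φ⁽ᵏ⁾([a_ij]) ξ‖² ≤ p_λ^k([a_ij])² ‖ξ‖²` for `ξ ∈ ℋ_n^k`). -/
def IsLocalCCOn {H : Type*} [NormedAddCommGroup H] [InnerProductSpace ℂ H] {ι : Type*}
    (pk : ∀ k : ℕ, Λ → Matrix (Fin k) (Fin k) B → ℝ)
    (E : ι → Submodule ℂ H) (S : Submodule ℂ B)
    (φ : ↥S →ₗ[ℂ] (↥(⨆ n, E n) →ₗ[ℂ] ↥(⨆ n, E n))) : Prop :=
  ∀ n : ι, ∃ l : Λ, ∀ (k : ℕ) (M : Matrix (Fin k) (Fin k) B) (hM : ∀ i j, M i j ∈ S),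
    ∀ (ξ : Fin k → H) (hξ : ∀ i, ξ i ∈ E n),
      ∑ i, ‖∑ j, (φ ⟨M i j, hM i j⟩ (inclE E n (ξ j) (hξ j)) : H)‖ ^ 2 ≤
        pk k l M ^ 2 * ∑ j, ‖ξ j‖ ^ 2

/-- `φ : B → C*(𝒟_ℰ)` is local completely contractive. -/
def IsLocalCC {H : Type*} [NormedAddCommGroup H] [InnerProductSpace ℂ H] {ι : Type*}
    (pk : ∀ k : ℕ, Λ → Matrix (Fin k) (Fin k) B → ℝ)
    (E : ι → Submodule ℂ H)
    (φ : B →ₗ[ℂ] (↥(⨆ n, E n) →ₗ[ℂ] ↥(⨆ n, E n))) : Prop :=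
  ∀ n : ι, ∃ l : Λ, ∀ (k : ℕ) (M : Matrix (Fin k) (Fin k) B),
    ∀ (ξ : Fin k → H) (hξ : ∀ i, ξ i ∈ E n),
      ∑ i, ‖∑ j, (φ (M i j) (inclE E n (ξ j) (hξ j)) : H)‖ ^ 2 ≤
        pk k l M ^ 2 * ∑ j, ‖ξ j‖ ^ 2

/-- `φ`, defined on the subspace `S` of `B` and with values in `B(H)`, is local completely
positive (w.r.t. the trivial quantized domain `ℰ = {H}`, for which `C*(𝒟_ℰ) = B(H)`). -/
def IsLocalCPBOn {H : Type*} [NormedAddCommGroup H] [InnerProductSpace ℂ H]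
    (pk : ∀ k : ℕ, Λ → Matrix (Fin k) (Fin k) B → ℝ)
    (S : Submodule ℂ B) (φ : ↥S →ₗ[ℂ] (H →L[ℂ] H)) : Prop :=
  ∃ l : Λ, ∀ (k : ℕ) (M : Matrix (Fin k) (Fin k) B) (hM : ∀ i j, M i j ∈ S),
    (LocalPositive (pk k l) M →
      ∀ ξ : Fin k → H, 0 ≤ ∑ i, ∑ j, (inner ℂ (ξ i) (φ ⟨M i j, hM i j⟩ (ξ j)) : ℂ)) ∧
    (pk k l M = 0 → ∀ i j, φ ⟨M i j, hM i j⟩ = 0)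

/-- `φ : B → B(H)` is local completely positive (w.r.t. the trivial quantized domain
`ℰ = {H}`). -/
def IsLocalCPB {H : Type*} [NormedAddCommGroup H] [InnerProductSpace ℂ H]
    (pk : ∀ k : ℕ, Λ → Matrix (Fin k) (Fin k) B → ℝ)
    (φ : B →ₗ[ℂ] (H →L[ℂ] H)) : Prop :=
  ∃ l : Λ, ∀ (k : ℕ) (M : Matrix (Fin k) (Fin k) B),
    (LocalPositive (pk k l) M →
      ∀ ξ : Fin k → H, 0 ≤ ∑ i, ∑ j, (inner ℂ (ξ i) (φ (M i j) (ξ j)) : ℂ)) ∧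
    (pk k l M = 0 → ∀ i j, φ (M i j) = 0)

end Hilbert

/-! ### The `2 × 2` constructions -/

section Two

variable {H : Type*} [NormedAddCommGroup H] [InnerProductSpace ℂ H]

/-- The quantized domain `ℰ ⊕ ℰ = {ℋ_n ⊕ ℋ_n}` in `H ⊕ H` (modeled as `PiLp 2` over
`Fin 2`). -/
def E2 {ι : Type*} (E : ι → Submodule ℂ H) (n : ι) : Submodule ℂ (PiLp 2 fun _ : Fin 2 => H) where
  carrier := {v | ∀ j, v j ∈ E n}
  add_mem' := fun hv hw j => (E n).add_mem (hv j) (hw j)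
  zero_mem' := fun _ => (E n).zero_mem
  smul_mem' := fun c _ hv j => (E n).smul_mem c (hv j)

theorem E2_directed {ι : Type*} {E : ι → Submodule ℂ H} (hE : Directed (· ≤ ·) E) :
    Directed (· ≤ ·) (E2 E) := fun i j =>
  let ⟨k, h1, h2⟩ := hE i j
  ⟨k, fun _ hv l => h1 (hv l), fun _ hv l => h2 (hv l)⟩

/-- The `j`-th component map `𝒟_{ℰ⊕ℰ} → 𝒟_ℰ`. -/
def cmpD {ι : Type*} [Nonempty ι] (E : ι → Submodule ℂ H) (hE : Directed (· ≤ ·) E)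
    (j : Fin 2) : ↥(⨆ n, E2 E n) →ₗ[ℂ] ↥(⨆ n, E n) where
  toFun v := ⟨(v : PiLp 2 fun _ : Fin 2 => H) j, by
    obtain ⟨n, hn⟩ := (Submodule.mem_iSup_of_directed _ (E2_directed hE)).mp v.2
    exact le_iSup E n (hn j)⟩
  map_add' v w := Subtype.ext rfl
  map_smul' c v := Subtype.ext rfl

end Two

section Mat2

variable {A : Type*} [Ring A] [StarRing A] [Algebra ℂ A] {Λ : Type*}

/-- The canonical identification of `M_k(M₂(A))` with `M_{2k}(A)`. -/
def matFlatten (k : ℕ) (X : Matrix (Fin k) (Fin k) (Matrix (Fin 2) (Fin 2) A)) :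
    Matrix (Fin (k * 2)) (Fin (k * 2)) A :=
  Matrix.of fun i j =>
    X (finProdFinEquiv.symm i).1 (finProdFinEquiv.symm j).1
      (finProdFinEquiv.symm i).2 (finProdFinEquiv.symm j).2

/-- The C*-seminorms `p_λ^k` on the matrix algebras `M_k(M₂(A))`, obtained from the
C*-seminorms `p_λ^{2k}` on `M_{2k}(A)` via the canonical identification. -/
def pk2 (pk : ∀ k : ℕ, Λ → Matrix (Fin k) (Fin k) A → ℝ) (k : ℕ) (l : Λ)
    (X : Matrix (Fin k) (Fin k) (Matrix (Fin 2) (Fin 2) A)) : ℝ :=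
  pk (k * 2) l (matFlatten k X)

variable [StarModule ℂ A]

/-- The local operator system `S_M ⊆ M₂(A)` associated with a local operator space `M ⊆ A`:
all matrices `[[α·1, a], [b*, β·1]]` with `α, β ∈ ℂ` and `a, b ∈ M`. -/
def SM (M : Submodule ℂ A) : Submodule ℂ (Matrix (Fin 2) (Fin 2) A) where
  carrier := {X | X 0 0 ∈ Submodule.span ℂ ({1} : Set A) ∧
    X 1 1 ∈ Submodule.span ℂ ({1} : Set A) ∧ X 0 1 ∈ M ∧ star (X 1 0) ∈ M}
  add_mem' := fun {X Y} hX hY =>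
    ⟨add_mem hX.1 hY.1, add_mem hX.2.1 hY.2.1, add_mem hX.2.2.1 hY.2.2.1, by
      rw [Matrix.add_apply, star_add]; exact add_mem hX.2.2.2 hY.2.2.2⟩
  zero_mem' := ⟨zero_mem _, zero_mem _, zero_mem _, by
    rw [Matrix.zero_apply, star_zero]; exact zero_mem _⟩
  smul_mem' := fun c X hX =>
    ⟨Submodule.smul_mem _ c hX.1, Submodule.smul_mem _ c hX.2.1,
      Submodule.smul_mem _ c hX.2.2.1, by
      rw [Matrix.smul_apply, star_smul]; exact Submodule.smul_mem _ _ hX.2.2.2⟩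

end Mat2


lemma lin_nonneg_real (s B : ℝ) (h : ∀ r : ℝ, 0 ≤ r * s + B) : s = 0 := by
  by_contra hs
  have h2 := h (-(B + 1) / s)
  rw [div_mul_cancel₀ _ hs] at h2
  linarith

lemma quad_aux {z w B : ℂ} (h : ∀ t : ℂ, 0 ≤ (starRingEnd ℂ) t * z + t * w + B) :
    z = 0 ∧ w = 0 := by
  have key : ∀ u : ℂ, (∀ r : ℝ, 0 ≤ (r : ℂ) * u + B) → u = 0 := by
    intro u hu
    have hre : ∀ r : ℝ, 0 ≤ r * u.re + B.re := by
      intro r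
      have := (Complex.le_def.mp (hu r)).1
      simpa using this
    have him : ∀ r : ℝ, r * u.im + B.im = 0 := by
      intro r
      have := (Complex.le_def.mp (hu r)).2
      simpa using this.symm
    have h1 : u.re = 0 := lin_nonneg_real _ _ hre
    have h2 : u.im = 0 := by
      have h0 := him 0; have hone := him 1
      simp at h0; rw [h0] at hone; simpa using hone
    exact Complex.ext h1 h2
  have hzw : z + w = 0 := by
    apply key
    intro r
    have := h (r : ℂ)
    convert this using 1
    push_cast [Complex.conj_ofReal]
    ring
  have hzw2 : Complex.I * (w - z) = 0 := by
    apply key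
    intro r
    have := h ((r : ℂ) * Complex.I)
    convert this using 1
    simp [map_mul, Complex.conj_ofReal, Complex.conj_I]
    ring
  have hwz : w = z := by
    rcases mul_eq_zero.mp hzw2 with h' | h'
    · exact absurd h' Complex.I_ne_zero
    · linear_combination h'
  constructor <;> [skip; rw [hwz]] <;> · rw [hwz] at hzw; linear_combination hzw / 2

lemma orth_dense {H : Type*} [NormedAddCommGroup H] [InnerProductSpace ℂ H]
    {E : ℕ → Submodule ℂ H} (hd : Dense (⋃ n, (E n : Set H))) {u : H}
    (h : ∀ n, ∀ y ∈ E n, (inner ℂ y u : ℂ) = 0) : u = 0 := by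
  have hS : IsClosed {y : H | (inner ℂ y u : ℂ) = 0} :=
    isClosed_eq (Continuous.inner continuous_id continuous_const) continuous_const
  have hsub : (⋃ n, (E n : Set H)) ⊆ {y | (inner ℂ y u : ℂ) = 0} := by
    rintro y ⟨s, ⟨n, rfl⟩, hy⟩; exact h n y hy
  have hall : ∀ y : H, (inner ℂ y u : ℂ) = 0 := by
    intro y
    have h1 : closure (⋃ n, (E n : Set H)) ⊆ {y | (inner ℂ y u : ℂ) = 0} :=
      hS.closure_subset_iff.mpr hsub
    rw [hd.closure_eq] at h1
    exact h1 (Set.mem_univ y)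
  exact inner_self_eq_zero.mp (hall u)

set_option linter.unusedSectionVars false
section AuxC
variable {A : Type*} [Ring A] [StarRing A] [Algebra ℂ A]

/-- Embedding into the (1,1) corner of `M₂(A)`. -/
def iota1 : A →ₗ[ℂ] Matrix (Fin 2) (Fin 2) A where
  toFun a := Matrix.of ![![a, 0], ![0, 0]]
  map_add' a b := by ext i j; fin_cases i <;> fin_cases j <;> simp
  map_smul' c a := by ext i j; fin_cases i <;> fin_cases j <;> simp

/-- Embedding into the (2,2) corner of `M₂(A)`. -/
def iota2 : A →ₗ[ℂ] Matrix (Fin 2) (Fin 2) A where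
  toFun d := Matrix.of ![![0, 0], ![0, d]]
  map_add' a b := by ext i j; fin_cases i <;> fin_cases j <;> simp
  map_smul' c a := by ext i j; fin_cases i <;> fin_cases j <;> simp

lemma iota1_mul (a b : A) : iota1 a * iota1 b = iota1 (a * b) := by
  ext i j; fin_cases i <;> fin_cases j <;>
    simp [iota1, Matrix.mul_apply, Fin.sum_univ_two]

lemma iota2_mul (a b : A) : iota2 a * iota2 b = iota2 (a * b) := by
  ext i j; fin_cases i <;> fin_cases j <;>
    simp [iota2, Matrix.mul_apply, Fin.sum_univ_two]

lemma iota1_star (a : A) : star (iota1 a) = iota1 (star a) := by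
  ext i j; fin_cases i <;> fin_cases j <;>
    simp [iota1, Matrix.star_apply]

lemma iota2_star (a : A) : star (iota2 a) = iota2 (star a) := by
  ext i j; fin_cases i <;> fin_cases j <;>
    simp [iota2, Matrix.star_apply]

lemma iota_one_add : iota1 (1 : A) + iota2 (1 : A) = 1 := by
  ext i j; fin_cases i <;> fin_cases j <;>
    simp [iota1, iota2, Matrix.one_apply]

lemma map_iota_mul (ι : A →ₗ[ℂ] Matrix (Fin 2) (Fin 2) A)
    (hmul : ∀ a b, ι a * ι b = ι (a * b)) {k : ℕ}
    (B C : Matrix (Fin k) (Fin k) A) :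
    (B * C).map ι = B.map ι * C.map ι := by
  refine Matrix.ext fun i j => ?_
  simp only [Matrix.map_apply, Matrix.mul_apply]
  rw [map_sum]
  exact Finset.sum_congr rfl fun s _ => (hmul _ _).symm

lemma map_iota_star (ι : A →ₗ[ℂ] Matrix (Fin 2) (Fin 2) A)
    (hstar : ∀ a, star (ι a) = ι (star a)) {k : ℕ}
    (B : Matrix (Fin k) (Fin k) A) :
    (star B).map ι = star (B.map ι) := by
  refine Matrix.ext fun i j => ?_
  simp only [Matrix.map_apply, Matrix.star_apply, hstar]

end AuxC

set_option linter.unusedSectionVars false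

section AuxH
variable {H : Type*} [NormedAddCommGroup H] [InnerProductSpace ℂ H]
variable {A : Type*} [Ring A] [StarRing A] [Algebra ℂ A]

lemma pilp_norm_comp_le (v : PiLp 2 fun _ : Fin 2 => H) (t : Fin 2) : ‖v t‖ ≤ ‖v‖ := by
  have h := PiLp.norm_sq_eq_of_L2 (fun _ : Fin 2 => H) v
  have h2 : ‖v t‖ ^ 2 ≤ ‖v‖ ^ 2 := by
    rw [h]
    exact Finset.single_le_sum (f := fun i => ‖v i‖ ^ 2) (fun i _ => by positivity)
      (Finset.mem_univ t)
  nlinarith [h2, norm_nonneg (v t), norm_nonneg v]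

lemma mem_E2_iff {E : ℕ → Submodule ℂ H} {n : ℕ} {v : PiLp 2 fun _ : Fin 2 => H} :
    v ∈ E2 E n ↔ ∀ j, v j ∈ E n := Iff.rfl

/-- The vector supported at slot `t`. -/
def sing (t : Fin 2) (y : H) : PiLp 2 fun _ : Fin 2 => H :=
  WithLp.toLp 2 (fun s => if s = t then y else 0)

lemma sing_mem {E : ℕ → Submodule ℂ H} {n : ℕ} {y : H} (hy : y ∈ E n) (t : Fin 2) :
    sing t y ∈ E2 E n := by
  intro s
  by_cases h : s = t <;> simp [sing, h, hy, Submodule.zero_mem]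

/-- The embedding `𝒟_ℰ → 𝒟_{ℰ⊕ℰ}` in slot `t`. -/
def embD (E : ℕ → Submodule ℂ H) (hE : Monotone E) (t : Fin 2) :
    ↥(⨆ n, E n) →ₗ[ℂ] ↥(⨆ n, E2 E n) where
  toFun w := ⟨sing t (w : H), by
    obtain ⟨m, hm⟩ := (Submodule.mem_iSup_of_directed E hE.directed_le).mp w.2
    exact le_iSup (E2 E) m (sing_mem hm t)⟩
  map_add' v w := by
    apply Subtype.ext
    refine PiLp.ext fun s => ?_
    by_cases h : s = t <;> simp [sing, h]
  map_smul' c w := by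
    apply Subtype.ext
    refine PiLp.ext fun s => ?_
    by_cases h : s = t <;> simp [sing, h]

/-- `φ = (component t) ∘ Φ(ι ·) ∘ (embedding at t)`. -/
def phiMap (E : ℕ → Submodule ℂ H) (hE : Monotone E)
    (Φ : Matrix (Fin 2) (Fin 2) A →ₗ[ℂ] (↥(⨆ n, E2 E n) →ₗ[ℂ] ↥(⨆ n, E2 E n)))
    (ι : A →ₗ[ℂ] Matrix (Fin 2) (Fin 2) A) (t : Fin 2) :
    A →ₗ[ℂ] (↥(⨆ n, E n) →ₗ[ℂ] ↥(⨆ n, E n)) where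
  toFun a := cmpD E hE.directed_le t ∘ₗ Φ (ι a) ∘ₗ embD E hE t
  map_add' a b := by
    simp only [map_add]
    ext w
    simp [LinearMap.add_comp, LinearMap.comp_add]
  map_smul' c a := by
    simp only [map_smul]
    ext w
    simp [LinearMap.smul_comp, LinearMap.comp_smul]

lemma phiMap_val (E : ℕ → Submodule ℂ H) (hE : Monotone E)
    (Φ : Matrix (Fin 2) (Fin 2) A →ₗ[ℂ] (↥(⨆ n, E2 E n) →ₗ[ℂ] ↥(⨆ n, E2 E n)))
    (ι : A →ₗ[ℂ] Matrix (Fin 2) (Fin 2) A) (t : Fin 2) (a : A) (w : ↥(⨆ n, E n)) :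
    (phiMap E hE Φ ι t a w : H) =
      (Φ (ι a) (embD E hE t w) : PiLp 2 fun _ : Fin 2 => H) t := rfl

end AuxH

section AuxH2
variable {H : Type*} [NormedAddCommGroup H] [InnerProductSpace ℂ H]

lemma sing_norm (t : Fin 2) (y : H) : ‖(sing t y : PiLp 2 fun _ : Fin 2 => H)‖ = ‖y‖ := by
  rw [PiLp.norm_eq_of_L2]
  fin_cases t <;> simp [sing, Fin.sum_univ_two]

lemma sing_inner (t : Fin 2) (y : H) (u : PiLp 2 fun _ : Fin 2 => H) :
    (inner ℂ (sing t y) u : ℂ) = inner ℂ y (u t) := by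
  rw [PiLp.inner_apply, Fin.sum_univ_two]
  fin_cases t <;> simp [sing]

lemma E2_mono {E : ℕ → Submodule ℂ H} (hE : Monotone E) : Monotone (E2 E) :=
  fun _ _ hij _ hv s => hE hij (hv s)

end AuxH2

section AuxP
variable {A : Type*} [Ring A] [StarRing A] [Algebra ℂ A] {Λ : Type*}

lemma IsCStarSeminorm.zero' {p : A → ℝ} (h : IsCStarSeminorm p) : p 0 = 0 := by
  simpa using h.map_smul 0 0

variable {p : Λ → A → ℝ} {pk : ∀ k : ℕ, Λ → Matrix (Fin k) (Fin k) A → ℝ}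

lemma p_zero (hpk : IsMatrixCStarSeminormFamily p pk) (l : Λ) : p l 0 = 0 := by
  have h := hpk.compat l 0
  rw [(hpk.cstarSeminorm 1 l).zero'] at h
  simpa using h.symm

lemma pk2_zero (hpk : IsMatrixCStarSeminormFamily p pk)
    (ι : A →ₗ[ℂ] Matrix (Fin 2) (Fin 2) A)
    (hι : ∀ (a : A) (i j : Fin 2), ι a i j = a ∨ ι a i j = 0)
    {k : ℕ} {l : Λ} {C : Matrix (Fin k) (Fin k) A} (hC : pk k l C = 0) :
    pk2 pk k l (C.map ι) = 0 := by
  rw [pk2, hpk.ker]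
  intro I J
  have hC' := (hpk.ker k l C).mp hC
  rcases hι (C (finProdFinEquiv.symm I).1 (finProdFinEquiv.symm J).1)
      (finProdFinEquiv.symm I).2 (finProdFinEquiv.symm J).2 with h | h <;>
    · show p l (matFlatten k (C.map ι) I J) = 0
      simp only [matFlatten, Matrix.of_apply, Matrix.map_apply]
      rw [h]
      first
        | exact hC' _ _
        | exact p_zero hpk l

lemma map_add' (ι : A →ₗ[ℂ] Matrix (Fin 2) (Fin 2) A) {k : ℕ}
    (X Y : Matrix (Fin k) (Fin k) A) : (X + Y).map ι = X.map ι + Y.map ι := by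
  refine Matrix.ext fun i j => ?_
  simp [Matrix.map_apply, map_add]

lemma localPositive_map (hpk : IsMatrixCStarSeminormFamily p pk)
    (ι : A →ₗ[ℂ] Matrix (Fin 2) (Fin 2) A)
    (hmul : ∀ a b, ι a * ι b = ι (a * b)) (hstar : ∀ a, star (ι a) = ι (star a))
    (hι : ∀ (a : A) (i j : Fin 2), ι a i j = a ∨ ι a i j = 0)
    {k : ℕ} {l : Λ} {M : Matrix (Fin k) (Fin k) A} (hM : LocalPositive (pk k l) M) :
    LocalPositive (pk2 pk k l) (M.map ι) := by
  obtain ⟨b, c, hc, hMeq⟩ := hM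
  refine ⟨b.map ι, c.map ι, pk2_zero hpk ι hι hc, ?_⟩
  rw [hMeq, map_add' ι, map_iota_mul ι hmul, map_iota_star ι hstar]

lemma iota1_entry (a : A) (i j : Fin 2) : iota1 a i j = a ∨ iota1 a i j = 0 := by
  fin_cases i <;> fin_cases j <;> simp [iota1]

lemma iota2_entry (a : A) (i j : Fin 2) : iota2 a i j = a ∨ iota2 a i j = 0 := by
  fin_cases i <;> fin_cases j <;> simp [iota2]

end AuxP


set_option maxHeartbeats 2000000

/-! ## Statement 14

Let `Φ : M₂(𝒜) → C*(𝒟_{ℰ⊕ℰ})` be a unital local completely positive map satisfying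
`Φ([[1, 0], [0, 0]]) = [[1, 0], [0, 0]]`.  Then there exist unital local completely
positive maps `φ₁, φ₂ : 𝒜 → C*(𝒟_ℰ)` such that
`Φ([[a, 0], [0, 0]]) = [[φ₁(a), 0], [0, 0]]` and
`Φ([[0, 0], [0, d]]) = [[0, 0], [0, φ₂(d)]]` for all `a, d ∈ 𝒜`. -/
theorem statement_14 {A : Type*} {Λ : Type*} [Ring A] [StarRing A] [Algebra ℂ A]
    [StarModule ℂ A] [Nonempty Λ] [UniformSpace A] [IsUniformAddGroup A] {p : Λ → A → ℝ}
    (hA : IsLocallyCStarAlgebra p)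
    {pk : ∀ k : ℕ, Λ → Matrix (Fin k) (Fin k) A → ℝ}
    (hpk : IsMatrixCStarSeminormFamily p pk)
    {H : Type*} [NormedAddCommGroup H] [InnerProductSpace ℂ H] [CompleteSpace H]
    {E : ℕ → Submodule ℂ H} (hE : IsQuantizedFrechetDomain E)
    (Φ : Matrix (Fin 2) (Fin 2) A →ₗ[ℂ] (↥(⨆ n, E2 E n) →ₗ[ℂ] ↥(⨆ n, E2 E n)))
    (hmem : ∀ X, MemCStar (E2 E) (Φ X))
    (huni : Φ 1 = LinearMap.id)
    (hcp : IsLocalCP (pk2 pk) (E2 E) Φ)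
    (hcorner : ∀ v : ↥(⨆ n, E2 E n),
      (Φ (Matrix.of ![![(1 : A), 0], ![0, 0]]) v : PiLp 2 fun _ : Fin 2 => H) 0 =
        (v : PiLp 2 fun _ : Fin 2 => H) 0 ∧
      (Φ (Matrix.of ![![(1 : A), 0], ![0, 0]]) v : PiLp 2 fun _ : Fin 2 => H) 1 = 0) :
    ∃ φ₁ φ₂ : A →ₗ[ℂ] (↥(⨆ n, E n) →ₗ[ℂ] ↥(⨆ n, E n)),
      (∀ a, MemCStar E (φ₁ a)) ∧ (∀ a, MemCStar E (φ₂ a)) ∧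
      φ₁ 1 = LinearMap.id ∧ φ₂ 1 = LinearMap.id ∧
      IsLocalCP pk E φ₁ ∧ IsLocalCP pk E φ₂ ∧
      (∀ (a : A) (v : ↥(⨆ n, E2 E n)),
        (Φ (Matrix.of ![![a, 0], ![0, 0]]) v : PiLp 2 fun _ : Fin 2 => H) 0 =
          (φ₁ a (cmpD E hE.mono.directed_le 0 v) : H) ∧
        (Φ (Matrix.of ![![a, 0], ![0, 0]]) v : PiLp 2 fun _ : Fin 2 => H) 1 = 0) ∧
      (∀ (d : A) (v : ↥(⨆ n, E2 E n)),
        (Φ (Matrix.of ![![(0 : A), 0], ![0, d]]) v : PiLp 2 fun _ : Fin 2 => H) 0 = 0 ∧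
        (Φ (Matrix.of ![![(0 : A), 0], ![0, d]]) v : PiLp 2 fun _ : Fin 2 => H) 1 =
          (φ₂ d (cmpD E hE.mono.directed_le 1 v) : H)) := by
  have hdir := hE.mono.directed_le
  -- Projection facts for the two corner projections
  have hproj0 : ∀ v : ↥(⨆ n, E2 E n),
      (Φ (iota1 1) v : PiLp 2 fun _ : Fin 2 => H) 0 = (v : PiLp 2 fun _ : Fin 2 => H) 0 ∧
      (Φ (iota1 1) v : PiLp 2 fun _ : Fin 2 => H) 1 = 0 := fun v => hcorner v
  have hiota21 : iota2 (1 : A) = 1 - iota1 1 := eq_sub_iff_add_eq'.mpr iota_one_add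
  have hproj1 : ∀ v : ↥(⨆ n, E2 E n),
      (Φ (iota2 1) v : PiLp 2 fun _ : Fin 2 => H) 0 = 0 ∧
      (Φ (iota2 1) v : PiLp 2 fun _ : Fin 2 => H) 1 = (v : PiLp 2 fun _ : Fin 2 => H) 1 := by
    intro v
    rw [hiota21, map_sub, huni]
    have h0 := (hproj0 v).1
    have h1 := (hproj0 v).2
    constructor
    · simp only [LinearMap.sub_apply, LinearMap.id_apply, AddSubgroupClass.coe_sub,
        PiLp.sub_apply, h0, sub_self]
    · simp only [LinearMap.sub_apply, LinearMap.id_apply, AddSubgroupClass.coe_sub,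
        PiLp.sub_apply, h1, sub_zero]
  have hkill0 : ∀ (n : ℕ) (ζ : PiLp 2 fun _ : Fin 2 => H) (hζ : ζ ∈ E2 E n), ζ 0 = 0 →
      Φ (iota1 1) (inclE (E2 E) n ζ hζ) = 0 := by
    intro n ζ hζ h0
    have c0 : (Φ (iota1 1) (inclE (E2 E) n ζ hζ) : PiLp 2 fun _ : Fin 2 => H) 0 = 0 := by
      rw [(hproj0 _).1]; exact h0
    have c1 : (Φ (iota1 1) (inclE (E2 E) n ζ hζ) : PiLp 2 fun _ : Fin 2 => H) 1 = 0 :=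
      (hproj0 _).2
    apply Subtype.ext
    refine PiLp.ext fun s => ?_
    fin_cases s
    · exact c0
    · exact c1
  have hkill1 : ∀ (n : ℕ) (ζ : PiLp 2 fun _ : Fin 2 => H) (hζ : ζ ∈ E2 E n), ζ 1 = 0 →
      Φ (iota2 1) (inclE (E2 E) n ζ hζ) = 0 := by
    intro n ζ hζ h1
    have c0 : (Φ (iota2 1) (inclE (E2 E) n ζ hζ) : PiLp 2 fun _ : Fin 2 => H) 0 = 0 :=
      (hproj1 _).1
    have c1 : (Φ (iota2 1) (inclE (E2 E) n ζ hζ) : PiLp 2 fun _ : Fin 2 => H) 1 = 0 := by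
      rw [(hproj1 _).2]; exact h1
    apply Subtype.ext
    refine PiLp.ext fun s => ?_
    fin_cases s
    · exact c0
    · exact c1
  -- The key Cauchy-Schwarz type lemma
  have key : ∀ e x : Matrix (Fin 2) (Fin 2) A, star e = e → e * e = e → e * x = x →
      ∀ (n : ℕ) (ζ η : PiLp 2 fun _ : Fin 2 => H) (hζ : ζ ∈ E2 E n) (hη : η ∈ E2 E n),
      Φ e (inclE (E2 E) n ζ hζ) = 0 →
      (inner ℂ ζ ((Φ x (inclE (E2 E) n η hη) : ↥(⨆ n, E2 E n)) :
        PiLp 2 fun _ : Fin 2 => H) : ℂ) = 0 ∧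
      (inner ℂ η ((Φ (star x) (inclE (E2 E) n ζ hζ) : ↥(⨆ n, E2 E n)) :
        PiLp 2 fun _ : Fin 2 => H) : ℂ) = 0 := by
    intro e x he hee hex n ζ η hζ hη hΦe
    obtain ⟨l, hl⟩ := hcp n
    have hxe : star x * e = star x := by
      conv_lhs => rw [← he, ← star_mul, hex]
    set M : Matrix (Fin 2) (Fin 2) (Matrix (Fin 2) (Fin 2) A) :=
      Matrix.of ![![e, x], ![star x, star x * x]] with hM
    have hMpos : LocalPositive (pk2 pk 2 l) M := by
      refine ⟨Matrix.of ![![e, x], ![0, 0]], 0, ?_, ?_⟩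
      · show pk2 pk 2 l 0 = 0
        have hfl : matFlatten 2 (0 : Matrix (Fin 2) (Fin 2) (Matrix (Fin 2) (Fin 2) A)) = 0 := by
          refine Matrix.ext fun i j => ?_
          simp [matFlatten]
        rw [pk2, hfl, (hpk.cstarSeminorm _ l).zero']
      · rw [add_zero]
        refine Matrix.ext fun i j => ?_
        fin_cases i <;> fin_cases j <;>
          simp [hM, Matrix.mul_apply, Fin.sum_univ_two, Matrix.star_apply, he, hee, hex, hxe]
    have hq : ∀ t : ℂ,
        0 ≤ (starRingEnd ℂ) t *
            (inner ℂ ζ ((Φ x (inclE (E2 E) n η hη) : ↥(⨆ n, E2 E n)) :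
              PiLp 2 fun _ : Fin 2 => H) : ℂ) +
          t * (inner ℂ η ((Φ (star x) (inclE (E2 E) n ζ hζ) : ↥(⨆ n, E2 E n)) :
              PiLp 2 fun _ : Fin 2 => H) : ℂ) +
          (inner ℂ η ((Φ (star x * x) (inclE (E2 E) n η hη) : ↥(⨆ n, E2 E n)) :
              PiLp 2 fun _ : Fin 2 => H) : ℂ) := by
      intro t
      have hξ : ∀ i, (![t • ζ, η]) i ∈ E2 E n := by
        intro i
        fin_cases i
        · exact Submodule.smul_mem (E2 E n) t hζ
        · exact hη
      have hpos := (hl 2 M).1 hMpos ![t • ζ, η] hξ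
      have hM00 : M 0 0 = e := rfl
      have hM01 : M 0 1 = x := rfl
      have hM10 : M 1 0 = star x := rfl
      have hM11 : M 1 1 = star x * x := rfl
      have hi0 : ∀ h', inclE (E2 E) n (![t • ζ, η] 0) h' = t • inclE (E2 E) n ζ hζ :=
        fun _ => Subtype.ext rfl
      have hi1 : ∀ h', inclE (E2 E) n (![t • ζ, η] 1) h' = inclE (E2 E) n η hη :=
        fun _ => Subtype.ext rfl
      rw [Fin.sum_univ_two] at hpos
      rw [Fin.sum_univ_two, Fin.sum_univ_two] at hpos
      rw [hi0, hi1, hM00, hM01, hM10, hM11] at hpos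
      have hv0 : (![t • ζ, η]) 0 = t • ζ := rfl
      have hv1 : (![t • ζ, η]) 1 = η := rfl
      rw [hv0, hv1] at hpos
      rw [map_smul, hΦe, smul_zero] at hpos
      have hz : ((0 : ↥(⨆ n, E2 E n)) : PiLp 2 fun _ : Fin 2 => H) = 0 := rfl
      rw [hz, inner_zero_right, zero_add] at hpos
      rw [map_smul] at hpos
      have hsm : ∀ u : ↥(⨆ n, E2 E n), ((t • u : ↥(⨆ n, E2 E n)) :
          PiLp 2 fun _ : Fin 2 => H) = t • (u : PiLp 2 fun _ : Fin 2 => H) := fun _ => rfl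
      rw [hsm] at hpos
      rw [inner_smul_left, inner_smul_right] at hpos
      convert hpos using 1
      ring
    exact quad_aux hq
  -- the two instantiated key facts
  have keyA : ∀ (a : A) (n : ℕ) (ζ η : PiLp 2 fun _ : Fin 2 => H)
      (hζ : ζ ∈ E2 E n) (hη : η ∈ E2 E n), ζ 0 = 0 →
      (inner ℂ ζ ((Φ (iota1 a) (inclE (E2 E) n η hη) : ↥(⨆ n, E2 E n)) :
        PiLp 2 fun _ : Fin 2 => H) : ℂ) = 0 ∧
      (inner ℂ η ((Φ (iota1 a) (inclE (E2 E) n ζ hζ) : ↥(⨆ n, E2 E n)) :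
        PiLp 2 fun _ : Fin 2 => H) : ℂ) = 0 := by
    intro a n ζ η hζ hη h0
    have hprop : ∀ b : A, iota1 (1 : A) * iota1 b = iota1 b := by
      intro b; rw [iota1_mul, one_mul]
    have hst : star (iota1 (1 : A)) = iota1 1 := by rw [iota1_star, star_one]
    have h1 := key (iota1 1) (iota1 a) hst (hprop 1) (hprop a) n ζ η hζ hη
      (hkill0 n ζ hζ h0)
    have h2 := key (iota1 1) (iota1 (star a)) hst (hprop 1) (hprop (star a)) n ζ η hζ hη
      (hkill0 n ζ hζ h0)
    rw [iota1_star, star_star] at h2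
    exact ⟨h1.1, h2.2⟩
  have keyB : ∀ (d : A) (n : ℕ) (ζ η : PiLp 2 fun _ : Fin 2 => H)
      (hζ : ζ ∈ E2 E n) (hη : η ∈ E2 E n), ζ 1 = 0 →
      (inner ℂ ζ ((Φ (iota2 d) (inclE (E2 E) n η hη) : ↥(⨆ n, E2 E n)) :
        PiLp 2 fun _ : Fin 2 => H) : ℂ) = 0 ∧
      (inner ℂ η ((Φ (iota2 d) (inclE (E2 E) n ζ hζ) : ↥(⨆ n, E2 E n)) :
        PiLp 2 fun _ : Fin 2 => H) : ℂ) = 0 := by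
    intro d n ζ η hζ hη h1'
    have hprop : ∀ b : A, iota2 (1 : A) * iota2 b = iota2 b := by
      intro b; rw [iota2_mul, one_mul]
    have hst : star (iota2 (1 : A)) = iota2 1 := by rw [iota2_star, star_one]
    have h1 := key (iota2 1) (iota2 d) hst (hprop 1) (hprop d) n ζ η hζ hη
      (hkill1 n ζ hζ h1')
    have h2 := key (iota2 1) (iota2 (star d)) hst (hprop 1) (hprop (star d)) n ζ η hζ hη
      (hkill1 n ζ hζ h1')
    rw [iota2_star, star_star] at h2
    exact ⟨h1.1, h2.2⟩
  have hv_mem : ∀ v : ↥(⨆ n, E2 E n), ∃ m, (v : PiLp 2 fun _ : Fin 2 => H) ∈ E2 E m :=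
    fun v => (Submodule.mem_iSup_of_directed _ (E2_directed hdir)).mp v.2
  -- structural facts for ι₁
  have hA1 : ∀ (a : A) (v : ↥(⨆ n, E2 E n)),
      (Φ (iota1 a) v : PiLp 2 fun _ : Fin 2 => H) 1 = 0 := by
    intro a v
    obtain ⟨m, hm⟩ := hv_mem v
    apply orth_dense hE.dense
    intro n y hy
    have hyN : y ∈ E (max n m) := hE.mono (le_max_left _ _) hy
    have hmN : (v : PiLp 2 fun _ : Fin 2 => H) ∈ E2 E (max n m) :=
      E2_mono hE.mono (le_max_right n m) hm
    have hinc : inclE (E2 E) (max n m) (v : PiLp 2 fun _ : Fin 2 => H) hmN = v :=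
      Subtype.ext rfl
    have h := (keyA a (max n m) (sing 1 y) (v : PiLp 2 fun _ : Fin 2 => H)
      (sing_mem hyN 1) hmN (by simp [sing])).1
    rw [hinc, sing_inner] at h
    exact h
  have hA2 : ∀ (a : A) (v : ↥(⨆ n, E2 E n)),
      (v : PiLp 2 fun _ : Fin 2 => H) 0 = 0 → Φ (iota1 a) v = 0 := by
    intro a v hv0
    obtain ⟨m, hm⟩ := hv_mem v
    apply Subtype.ext
    refine PiLp.ext fun s => ?_
    have hz : ((0 : ↥(⨆ n, E2 E n)) : PiLp 2 fun _ : Fin 2 => H) s = 0 := rfl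
    rw [hz]
    apply orth_dense hE.dense
    intro n y hy
    have hyN : y ∈ E (max n m) := hE.mono (le_max_left _ _) hy
    have hmN : (v : PiLp 2 fun _ : Fin 2 => H) ∈ E2 E (max n m) :=
      E2_mono hE.mono (le_max_right n m) hm
    have hinc : inclE (E2 E) (max n m) (v : PiLp 2 fun _ : Fin 2 => H) hmN = v :=
      Subtype.ext rfl
    have h := (keyA a (max n m) (v : PiLp 2 fun _ : Fin 2 => H) (sing s y)
      hmN (sing_mem hyN s) hv0).2
    rw [hinc, sing_inner] at h
    exact h
  have hA3 : ∀ (a : A) (v : ↥(⨆ n, E2 E n)),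
      (Φ (iota1 a) v : PiLp 2 fun _ : Fin 2 => H) 0 =
        (phiMap E hE.mono Φ iota1 0 a (cmpD E hdir 0 v) : H) := by
    intro a v
    have hrv : Φ (iota1 a) (v - embD E hE.mono 0 (cmpD E hdir 0 v)) = 0 := by
      apply hA2
      have : ((v - embD E hE.mono 0 (cmpD E hdir 0 v) : ↥(⨆ n, E2 E n)) :
          PiLp 2 fun _ : Fin 2 => H) 0 =
          (v : PiLp 2 fun _ : Fin 2 => H) 0 -
            ((embD E hE.mono 0 (cmpD E hdir 0 v) : ↥(⨆ n, E2 E n)) :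
              PiLp 2 fun _ : Fin 2 => H) 0 := rfl
      rw [this]
      have h2 : ((embD E hE.mono 0 (cmpD E hdir 0 v) : ↥(⨆ n, E2 E n)) :
          PiLp 2 fun _ : Fin 2 => H) 0 = (v : PiLp 2 fun _ : Fin 2 => H) 0 := rfl
      rw [h2, sub_self]
    have hv : v = embD E hE.mono 0 (cmpD E hdir 0 v) +
        (v - embD E hE.mono 0 (cmpD E hdir 0 v)) := by abel
    conv_lhs => rw [hv]
    rw [map_add, hrv, add_zero]
    rfl
  -- structural facts for ι₂
  have hB1 : ∀ (d : A) (v : ↥(⨆ n, E2 E n)),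
      (Φ (iota2 d) v : PiLp 2 fun _ : Fin 2 => H) 0 = 0 := by
    intro d v
    obtain ⟨m, hm⟩ := hv_mem v
    apply orth_dense hE.dense
    intro n y hy
    have hyN : y ∈ E (max n m) := hE.mono (le_max_left _ _) hy
    have hmN : (v : PiLp 2 fun _ : Fin 2 => H) ∈ E2 E (max n m) :=
      E2_mono hE.mono (le_max_right n m) hm
    have hinc : inclE (E2 E) (max n m) (v : PiLp 2 fun _ : Fin 2 => H) hmN = v :=
      Subtype.ext rfl
    have h := (keyB d (max n m) (sing 0 y) (v : PiLp 2 fun _ : Fin 2 => H)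
      (sing_mem hyN 0) hmN (by simp [sing])).1
    rw [hinc, sing_inner] at h
    exact h
  have hB2 : ∀ (d : A) (v : ↥(⨆ n, E2 E n)),
      (v : PiLp 2 fun _ : Fin 2 => H) 1 = 0 → Φ (iota2 d) v = 0 := by
    intro d v hv1
    obtain ⟨m, hm⟩ := hv_mem v
    apply Subtype.ext
    refine PiLp.ext fun s => ?_
    have hz : ((0 : ↥(⨆ n, E2 E n)) : PiLp 2 fun _ : Fin 2 => H) s = 0 := rfl
    rw [hz]
    apply orth_dense hE.dense
    intro n y hy
    have hyN : y ∈ E (max n m) := hE.mono (le_max_left _ _) hy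
    have hmN : (v : PiLp 2 fun _ : Fin 2 => H) ∈ E2 E (max n m) :=
      E2_mono hE.mono (le_max_right n m) hm
    have hinc : inclE (E2 E) (max n m) (v : PiLp 2 fun _ : Fin 2 => H) hmN = v :=
      Subtype.ext rfl
    have h := (keyB d (max n m) (v : PiLp 2 fun _ : Fin 2 => H) (sing s y)
      hmN (sing_mem hyN s) hv1).2
    rw [hinc, sing_inner] at h
    exact h
  have hB3 : ∀ (d : A) (v : ↥(⨆ n, E2 E n)),
      (Φ (iota2 d) v : PiLp 2 fun _ : Fin 2 => H) 1 =
        (phiMap E hE.mono Φ iota2 1 d (cmpD E hdir 1 v) : H) := by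
    intro d v
    have hrv : Φ (iota2 d) (v - embD E hE.mono 1 (cmpD E hdir 1 v)) = 0 := by
      apply hB2
      have : ((v - embD E hE.mono 1 (cmpD E hdir 1 v) : ↥(⨆ n, E2 E n)) :
          PiLp 2 fun _ : Fin 2 => H) 1 =
          (v : PiLp 2 fun _ : Fin 2 => H) 1 -
            ((embD E hE.mono 1 (cmpD E hdir 1 v) : ↥(⨆ n, E2 E n)) :
              PiLp 2 fun _ : Fin 2 => H) 1 := rfl
      rw [this]
      have h2 : ((embD E hE.mono 1 (cmpD E hdir 1 v) : ↥(⨆ n, E2 E n)) :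
          PiLp 2 fun _ : Fin 2 => H) 1 = (v : PiLp 2 fun _ : Fin 2 => H) 1 := rfl
      rw [h2, sub_self]
    have hv : v = embD E hE.mono 1 (cmpD E hdir 1 v) +
        (v - embD E hE.mono 1 (cmpD E hdir 1 v)) := by abel
    conv_lhs => rw [hv]
    rw [map_add, hrv, add_zero]
    rfl
  -- MemCStar
  have hmemP : ∀ (ι : A →ₗ[ℂ] Matrix (Fin 2) (Fin 2) A) (t : Fin 2) (a : A),
      MemCStar E (phiMap E hE.mono Φ ι t a) := by
    intro ι t a i
    obtain ⟨hc1, hc2, C, hc3⟩ := hmem (ι a) i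
    have hembmem : ∀ x : ↥(⨆ n, E n), (x : H) ∈ E i →
        ((embD E hE.mono t x : ↥(⨆ n, E2 E n)) : PiLp 2 fun _ : Fin 2 => H) ∈ E2 E i := by
      intro x hx s
      by_cases h : s = t <;> simp [embD, sing, h, hx, Submodule.zero_mem]
    refine ⟨?_, ?_, C, ?_⟩
    · intro x hx
      have h := hc1 (embD E hE.mono t x) (hembmem x hx)
      exact h t
    · intro x hx
      have hmem' : ((embD E hE.mono t x : ↥(⨆ n, E2 E n)) :
          PiLp 2 fun _ : Fin 2 => H) ∈ (E2 E i)ᗮ := by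
        rw [Submodule.mem_orthogonal]
        intro u hu
        rw [PiLp.inner_apply, Fin.sum_univ_two]
        have hcoe : ∀ s, ((embD E hE.mono t x : ↥(⨆ n, E2 E n)) :
            PiLp 2 fun _ : Fin 2 => H) s = if s = t then (x : H) else 0 := fun _ => rfl
        rw [hcoe 0, hcoe 1]
        rw [Submodule.mem_orthogonal] at hx
        fin_cases t <;> simp [hx (u 0) (hu 0), hx (u 1) (hu 1)]
      have h2 := hc2 (embD E hE.mono t x) hmem'
      rw [Submodule.mem_orthogonal]
      intro y hy
      rw [Submodule.mem_orthogonal] at h2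
      have h3 := h2 (sing t y) (sing_mem hy t)
      rw [sing_inner] at h3
      exact h3
    · intro x hx
      have h3 := hc3 (embD E hE.mono t x) (hembmem x hx)
      calc ‖(phiMap E hE.mono Φ ι t a x : H)‖
          ≤ ‖((Φ (ι a) (embD E hE.mono t x) : ↥(⨆ n, E2 E n)) :
              PiLp 2 fun _ : Fin 2 => H)‖ := pilp_norm_comp_le _ t
        _ ≤ C * ‖((embD E hE.mono t x : ↥(⨆ n, E2 E n)) :
              PiLp 2 fun _ : Fin 2 => H)‖ := h3
        _ = C * ‖(x : H)‖ := by rw [show ((embD E hE.mono t x : ↥(⨆ n, E2 E n)) :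
              PiLp 2 fun _ : Fin 2 => H) = sing t (x : H) from rfl, sing_norm]
  -- unitality
  have huni1 : phiMap E hE.mono Φ iota1 0 1 = LinearMap.id := by
    ext w
    rw [phiMap_val, (hproj0 _).1]
    rfl
  have huni2 : phiMap E hE.mono Φ iota2 1 1 = LinearMap.id := by
    ext w
    rw [phiMap_val, (hproj1 _).2]
    rfl
  -- local complete positivity
  have hlcp : ∀ (ι : A →ₗ[ℂ] Matrix (Fin 2) (Fin 2) A) (t : Fin 2),
      (∀ a b, ι a * ι b = ι (a * b)) → (∀ a, star (ι a) = ι (star a)) →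
      (∀ (a : A) (i j : Fin 2), ι a i j = a ∨ ι a i j = 0) →
      IsLocalCP pk E (phiMap E hE.mono Φ ι t) := by
    intro ι t hmul hstar hι n
    obtain ⟨l, hl⟩ := hcp n
    refine ⟨l, fun k M => ⟨?_, ?_⟩⟩
    · intro hMpos ξ hξ
      have hξ' : ∀ i, sing t (ξ i) ∈ E2 E n := fun i => sing_mem (hξ i) t
      have h := (hl k (M.map ι)).1 (localPositive_map hpk ι hmul hstar hι hMpos)
        (fun i => sing t (ξ i)) hξ'
      have hterm : ∀ i j, (inner ℂ (sing t (ξ i))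
          ((Φ ((M.map ι) i j) (inclE (E2 E) n (sing t (ξ j)) (hξ' j)) : ↥(⨆ n, E2 E n)) :
            PiLp 2 fun _ : Fin 2 => H) : ℂ) =
          inner ℂ (ξ i) ((phiMap E hE.mono Φ ι t (M i j) (inclE E n (ξ j) (hξ j)) : H)) := by
        intro i j
        rw [sing_inner, phiMap_val]
        have hemb : inclE (E2 E) n (sing t (ξ j)) (hξ' j) =
            embD E hE.mono t (inclE E n (ξ j) (hξ j)) := Subtype.ext rfl
        rw [hemb]
        rfl
      simp only [hterm] at h
      exact h
    · intro hM0 i j x hx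
      have h := (hl k (M.map ι)).2 (pk2_zero hpk ι hι hM0) i j (sing t x) (sing_mem hx t)
      show (phiMap E hE.mono Φ ι t (M i j) (inclE E n x hx) : H) = 0
      rw [phiMap_val]
      have hemb : inclE (E2 E) n (sing t x) (sing_mem hx t) =
          embD E hE.mono t (inclE E n x hx) := Subtype.ext rfl
      rw [hemb] at h
      rw [show ((M.map ι) i j) = ι (M i j) from rfl] at h
      rw [h]
      rfl
  refine ⟨phiMap E hE.mono Φ iota1 0, phiMap E hE.mono Φ iota2 1,
    hmemP iota1 0, hmemP iota2 1, huni1, huni2,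
    hlcp iota1 0 iota1_mul iota1_star iota1_entry,
    hlcp iota2 1 iota2_mul iota2_star iota2_entry, ?_, ?_⟩
  · intro a v
    exact ⟨hA3 a v, hA1 a v⟩
  · intro d v
    exact ⟨hB1 d v, hB3 d v⟩

end
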